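/- Let F be any field and n ≥ 3. Let 𝔏 be a finite collection of L lines in F^n, and let J be the set of joints formed by 𝔏. Then there exists a constant C_n, depending only on n, such that |J| ≤ C_n · L^{n/(n-1)}. -/

import Mathlib

/-- A line in `F^n`: a set of the form `{v + t • b : t ∈ F}` with `b ≠ 0`. -/
def IsLine (F : Type*) [Field F] {n : ℕ} (l : Set (Fin n → F)) : Prop :=
  ∃ v b : Fin n → F, b ≠ 0 ∧ l = {x | ∃ t : F, x = v + t • b}

/-- `b` is a direction of the line `l`. -/
def IsDirection (F : Type*) [Field F] {n : ℕ} (b : Fin n → F) (l : Set (Fin n → F)) : Prop :=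
  b ≠ 0 ∧ ∃ v : Fin n → F, l = {x | ∃ t : F, x = v + t • b}

/-- The lines `l 0, …, l (n-1)` form a joint at `x`: each passes through `x` and
their directions span `F^n`. -/
def FormsJoint (F : Type*) [Field F] {n : ℕ} (l : Fin n → Set (Fin n → F))
    (x : Fin n → F) : Prop :=
  (∀ i, x ∈ l i) ∧ ∃ b : Fin n → Fin n → F,
    (∀ i, IsDirection F (b i) (l i)) ∧ Submodule.span F (Set.range b) = ⊤

/-- `x` is a joint of the collection `𝔏`: there are (at least) `n` distinct lines of `𝔏`
through `x` whose directions span `F^n`. -/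
def IsJoint (F : Type*) [Field F] {n : ℕ} (𝔏 : Set (Set (Fin n → F)))
    (x : Fin n → F) : Prop :=
  ∃ l : Fin n → Set (Fin n → F), Function.Injective l ∧ (∀ i, l i ∈ 𝔏) ∧ FormsJoint F l x

/-- The multiplicity `N(x)`: the number of `n`-tuples of lines of `𝔏` forming a joint at `x`. -/
noncomputable def jointMult (F : Type*) [Field F] {n : ℕ} (𝔏 : Set (Set (Fin n → F)))
    (x : Fin n → F) : ℕ :=
  Set.ncard {l : Fin n → Set (Fin n → F) | (∀ i, l i ∈ 𝔏) ∧ FormsJoint F l x}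

/-- `𝔏` is generic: whenever `n` distinct lines of `𝔏` pass through a common point,
they form a joint there. -/
def Generic (F : Type*) [Field F] {n : ℕ} (𝔏 : Set (Set (Fin n → F))) : Prop :=
  ∀ (l : Fin n → Set (Fin n → F)) (x : Fin n → F), Function.Injective l →
    (∀ i, l i ∈ 𝔏) → (∀ i, x ∈ l i) → FormsJoint F l x


section JointsProof
open MvPolynomial Polynomial

open MvPolynomial Polynomial in
noncomputable def lineR {F : Type} [Field F] {n : ℕ} (v b : Fin n → F) :
    MvPolynomial (Fin n) F →ₐ[F] Polynomial F :=
  MvPolynomial.aeval (fun i => Polynomial.C (v i) + Polynomial.C (b i) * Polynomial.X)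

theorem eval_lineR {F : Type} [Field F] {n : ℕ} (v b : Fin n → F) (t : F) (p : MvPolynomial (Fin n) F) :
    Polynomial.eval t (lineR v b p) = MvPolynomial.eval (v + t • b) p := by
  show Polynomial.eval t (MvPolynomial.aeval (fun i => Polynomial.C (v i) + Polynomial.C (b i) * Polynomial.X) p)
      = MvPolynomial.eval (v + t • b) p
  have h : (Polynomial.aeval t : Polynomial F →ₐ[F] F).comp
      (MvPolynomial.aeval (fun i => Polynomial.C (v i) + Polynomial.C (b i) * Polynomial.X))
      = MvPolynomial.aeval (fun i => v i + t * b i) := by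
    apply MvPolynomial.algHom_ext
    intro i
    rw [AlgHom.comp_apply, MvPolynomial.aeval_X, MvPolynomial.aeval_X,
      map_add, map_mul, Polynomial.aeval_C, Polynomial.aeval_C, Polynomial.aeval_X,
      Algebra.algebraMap_self]
    simp only [RingHom.id_apply]; rw [mul_comm (b i) t]
  have h2 := congrFun (congrArg DFunLike.coe h) p
  simp only [AlgHom.coe_comp, Function.comp_apply, Polynomial.coe_aeval_eq_eval] at h2
  rw [h2, MvPolynomial.aeval_def, Algebra.algebraMap_self,
    show v + t • b = (fun i => v i + t * b i) from by funext i; simp]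
  rfl

open MvPolynomial Polynomial

theorem natDegree_lineR_le {F : Type} [Field F] {n : ℕ} (v b : Fin n → F)
    (p : MvPolynomial (Fin n) F) : (lineR v b p).natDegree ≤ p.totalDegree := by
  conv_lhs => rw [p.as_sum]
  rw [map_sum]
  apply Polynomial.natDegree_sum_le_of_forall_le
  intro β hβ
  rw [lineR, MvPolynomial.aeval_monomial]
  refine (Polynomial.natDegree_mul_le).trans ?_
  have h1 : (algebraMap F (Polynomial F) (coeff β p)).natDegree = 0 := by
    simp [Polynomial.natDegree_C]
  rw [h1, zero_add]
  refine (Polynomial.natDegree_prod_le _ _).trans ?_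
  refine le_trans ?_ (MvPolynomial.le_totalDegree hβ)
  rw [Finsupp.sum]
  apply Finset.sum_le_sum
  intro i _
  refine (Polynomial.natDegree_pow_le).trans ?_
  have : (Polynomial.C (v i) + Polynomial.C (b i) * Polynomial.X).natDegree ≤ 1 := by
    refine (Polynomial.natDegree_add_le _ _).trans ?_
    simp only [Polynomial.natDegree_C, max_le_iff]
    exact ⟨Nat.zero_le _, (Polynomial.natDegree_mul_le).trans (by simp)⟩
  calc β i * (Polynomial.C (v i) + Polynomial.C (b i) * Polynomial.X).natDegree
      ≤ β i * 1 := Nat.mul_le_mul_left _ this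
    _ = β i := Nat.mul_one _

theorem derivative_lineR {F : Type} [Field F] {n : ℕ} (v b : Fin n → F)
    (p : MvPolynomial (Fin n) F) :
    Polynomial.derivative (lineR v b p)
      = lineR v b (∑ i, MvPolynomial.C (b i) * MvPolynomial.pderiv i p) := by
  induction p using MvPolynomial.induction_on with
  | C a => simp [lineR]
  | add p q hp hq =>
      simp only [map_add, hp, hq, mul_add, Finset.sum_add_distrib]
  | mul_X p j hp =>
      simp only [map_mul, lineR, MvPolynomial.aeval_X, Polynomial.derivative_mul]
      rw [show (MvPolynomial.aeval fun i => Polynomial.C (v i) + Polynomial.C (b i) * Polynomial.X : MvPolynomial (Fin n) F →ₐ[F] Polynomial F) = lineR v b from rfl]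
      rw [hp]
      have hder : Polynomial.derivative (Polynomial.C (v j) + Polynomial.C (b j) * Polynomial.X) = Polynomial.C (b j) := by simp
      rw [hder]
      have hR : ∑ i, MvPolynomial.C (b i) * MvPolynomial.pderiv i (p * MvPolynomial.X j)
          = (∑ i, MvPolynomial.C (b i) * MvPolynomial.pderiv i p) * MvPolynomial.X j
            + MvPolynomial.C (b j) * p := by
        have : ∀ i, MvPolynomial.pderiv i (p * MvPolynomial.X j)
            = MvPolynomial.pderiv i p * MvPolynomial.X j
              + p * (if j = i then 1 else 0) := by
          intro i
          rw [Derivation.leibniz]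
          rw [MvPolynomial.pderiv_X]
          simp only [smul_eq_mul, Pi.single_apply]
          ring
        simp only [this]
        rw [Finset.sum_congr rfl (fun i _ => mul_add (MvPolynomial.C (b i)) _ _)]
        rw [Finset.sum_add_distrib]
        congr 1
        · rw [Finset.sum_congr rfl (fun i _ => (mul_assoc _ _ _).symm), ← Finset.sum_mul]
        · rw [Finset.sum_congr rfl (fun i _ => by rw [mul_ite, mul_ite, mul_one, mul_zero, mul_comm])]
          simp [Finset.sum_ite_eq]
          exact mul_comm _ _
      rw [hR, map_add, map_mul, map_mul]
      simp only [lineR, MvPolynomial.aeval_X, MvPolynomial.aeval_C]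
      rw [show (algebraMap F (Polynomial F)) (b j) = Polynomial.C (b j) from rfl]
      ring

open MvPolynomial

theorem exists_low_degree {F : Type} [Field F] {n : ℕ} (S : Set (Fin n → F)) (hS : S.Finite)
    (m : ℕ) (hcard : S.ncard < (m+1)^n) :
    ∃ p : MvPolynomial (Fin n) F, p ≠ 0 ∧ p.totalDegree ≤ n*m ∧
      ∀ x ∈ S, MvPolynomial.eval x p = 0 := by
  classical
  set T := hS.toFinset with hT
  set expo : (Fin n → Fin (m+1)) → (Fin n →₀ ℕ) :=
    fun c => Finsupp.equivFunOnFinite.symm (fun i => (c i : ℕ)) with hexpo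
  have hexpoinj : Function.Injective expo := by
    intro c d h
    have := congrArg Finsupp.equivFunOnFinite h
    simp only [hexpo, Equiv.apply_symm_apply] at this
    funext i
    exact Fin.ext (congrFun this i)
  set v : (Fin n → Fin (m+1)) → (↥T → F) :=
    fun c x => MvPolynomial.eval x.1 (MvPolynomial.monomial (expo c) 1) with hv
  have hnli : ¬ LinearIndependent F v := by
    intro h
    have hle := h.fintype_card_le_finrank
    rw [Module.finrank_pi] at hle
    simp only [Fintype.card_fun, Fintype.card_fin, Fintype.card_coe] at hle
    have hTc : T.card = S.ncard := (Set.ncard_eq_toFinset_card S hS).symm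
    omega
  obtain ⟨g, hsum, c₀, hc₀⟩ := Fintype.not_linearIndependent_iff.mp hnli
  refine ⟨∑ c, MvPolynomial.monomial (expo c) (g c), ?_, ?_, ?_⟩
  · intro hzero
    have : MvPolynomial.coeff (expo c₀) (∑ c, MvPolynomial.monomial (expo c) (g c)) = g c₀ := by
      rw [MvPolynomial.coeff_sum]
      rw [Finset.sum_eq_single c₀]
      · simp [MvPolynomial.coeff_monomial]
      · intro c _ hne
        rw [MvPolynomial.coeff_monomial, if_neg (fun h => hne (hexpoinj h))]
      · simp
    rw [hzero] at this
    simp at this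
    exact hc₀ this.symm
  · refine (MvPolynomial.totalDegree_finset_sum _ _).trans ?_
    apply Finset.sup_le
    intro c _
    refine (MvPolynomial.totalDegree_monomial_le _ _).trans ?_
    have h2 : ((expo c).sum fun _ => id) = ∑ i : Fin n, (c i : ℕ) := by
      rw [Finsupp.sum_fintype]
      · rfl
      · intro i; rfl
    rw [h2]
    calc ∑ i : Fin n, (c i : ℕ) ≤ ∑ _i : Fin n, m := Finset.sum_le_sum (fun i _ => Fin.is_le _)
      _ = n * m := by simp [Finset.sum_const, mul_comm]
  · intro x hx
    have hxT : x ∈ T := by rw [hT]; exact hS.mem_toFinset.mpr hx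
    have := congrFun hsum ⟨x, hxT⟩
    simp only [Finset.sum_apply, Pi.smul_apply, smul_eq_mul, Pi.zero_apply] at this
    rw [map_sum]
    rw [← this]
    apply Finset.sum_congr rfl
    intro c _
    simp [hv, MvPolynomial.eval_monomial]

open MvPolynomial

theorem coeff_mul_nat_eq_zero_of_pderiv {F : Type} [Field F] {n : ℕ}
    (p : MvPolynomial (Fin n) F) (i : Fin n) (h : MvPolynomial.pderiv i p = 0)
    (β : Fin n →₀ ℕ) : MvPolynomial.coeff β p * ((β i : ℕ) : F) = 0 := by
  classical
  by_cases hβs : β ∈ p.support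
  · by_cases hβi : β i = 0
    · simp [hβi]
    · have hle : Finsupp.single i 1 ≤ β := by
        rw [Finsupp.single_le_iff]
        omega
      have hco : MvPolynomial.coeff (β - Finsupp.single i 1) (MvPolynomial.pderiv i p)
          = MvPolynomial.coeff β p * ((β i : ℕ) : F) := by
        conv_lhs => rw [p.as_sum]
        rw [map_sum, MvPolynomial.coeff_sum]
        rw [Finset.sum_eq_single_of_mem β hβs]
        · rw [MvPolynomial.pderiv_monomial, MvPolynomial.coeff_monomial, if_pos rfl]
        · intro γ hγ hne
          rw [MvPolynomial.pderiv_monomial, MvPolynomial.coeff_monomial]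
          by_cases hγi : γ i = 0
          · simp [hγi]
          · rw [if_neg]
            intro heq
            apply hne
            have hleγ : Finsupp.single i 1 ≤ γ := by
              rw [Finsupp.single_le_iff]; omega
            have := congrArg (· + Finsupp.single i 1) heq
            simpa [tsub_add_cancel_of_le hleγ, tsub_add_cancel_of_le hle] using this
      rw [h] at hco
      simpa using hco.symm
  · rw [MvPolynomial.notMem_support_iff] at hβs
    simp [hβs]

open MvPolynomial

theorem frobenius_descent {F : Type} [Field F] {n : ℕ}
    (p : MvPolynomial (Fin n) F) (hp : p ≠ 0) (hdeg : 1 ≤ p.totalDegree)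
    (hder : ∀ i, MvPolynomial.pderiv i p = 0) :
    ∃ (e : F →+* F) (g : MvPolynomial (Fin n) F), g ≠ 0 ∧
      g.totalDegree < p.totalDegree ∧
      ∀ y : Fin n → F, MvPolynomial.eval (fun i => e (y i)) g = MvPolynomial.eval y p := by
  classical
  rcases CharP.char_is_prime_or_zero F (ringChar F) with hq | h0
  swap
  · -- char zero: contradiction
    exfalso
    haveI : CharP F 0 := h0 ▸ ringChar.charP F
    haveI : CharZero F := CharP.charP_to_charZero F
    have hsupp : ∀ β ∈ p.support, β = 0 := by
      intro β hβ
      have hc : MvPolynomial.coeff β p ≠ 0 := MvPolynomial.mem_support_iff.mp hβ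
      ext i
      have := coeff_mul_nat_eq_zero_of_pderiv p i (hder i) β
      rcases mul_eq_zero.mp this with h | h
      · exact absurd h hc
      · exact_mod_cast h
    have : p.totalDegree = 0 := by
      rw [MvPolynomial.totalDegree]
      apply Nat.le_antisymm _ (Nat.zero_le _)
      apply Finset.sup_le
      intro β hβ
      rw [hsupp β hβ]
      simp
    omega
  · set q := ringChar F with hqdef
    haveI : CharP F q := ringChar.charP F
    haveI : Fact q.Prime := ⟨hq⟩
    have hq2 : 2 ≤ q := hq.two_le
    have hdvd : ∀ β ∈ p.support, ∀ i, q ∣ β i := by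
      intro β hβ i
      have hc : MvPolynomial.coeff β p ≠ 0 := MvPolynomial.mem_support_iff.mp hβ
      have := coeff_mul_nat_eq_zero_of_pderiv p i (hder i) β
      rcases mul_eq_zero.mp this with h | h
      · exact absurd h hc
      · exact (CharP.cast_eq_zero_iff F q (β i)).mp h
    set divq : (Fin n →₀ ℕ) → (Fin n →₀ ℕ) :=
      fun β => β.mapRange (· / q) (Nat.zero_div q) with hdivq
    have hrecover : ∀ β ∈ p.support, ∀ i, q * (divq β i) = β i := by
      intro β hβ i
      simp only [hdivq, Finsupp.mapRange_apply]
      exact Nat.mul_div_cancel' (hdvd β hβ i) |>.symm ▸ (Nat.mul_div_cancel' (hdvd β hβ i))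
    have hinj : ∀ β ∈ p.support, ∀ γ ∈ p.support, divq β = divq γ → β = γ := by
      intro β hβ γ hγ h
      ext i
      rw [← hrecover β hβ i, ← hrecover γ hγ i, h]
    set g : MvPolynomial (Fin n) F :=
      ∑ β ∈ p.support, MvPolynomial.monomial (divq β) (MvPolynomial.coeff β p) with hg
    obtain ⟨β₀, hβ₀⟩ := MvPolynomial.support_nonempty.mpr hp
    refine ⟨frobenius F q, g, ?_, ?_, ?_⟩
    · intro hzero
      have : MvPolynomial.coeff (divq β₀) g = MvPolynomial.coeff β₀ p := by
        rw [hg, MvPolynomial.coeff_sum, Finset.sum_eq_single_of_mem β₀ hβ₀]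
        · rw [MvPolynomial.coeff_monomial, if_pos rfl]
        · intro γ hγ hne
          rw [MvPolynomial.coeff_monomial, if_neg (fun h => hne (hinj γ hγ β₀ hβ₀ h))]
      rw [hzero] at this
      simp only [MvPolynomial.coeff_zero] at this
      exact (MvPolynomial.mem_support_iff.mp hβ₀) this.symm
    · have hsum : ∀ β ∈ p.support, ((divq β).sum fun _ e => e) = (β.sum fun _ e => e) / q := by
        intro β hβ
        have h1 : ((divq β).sum fun _ e => e) = ∑ i : Fin n, divq β i :=
          Finsupp.sum_fintype _ _ (fun i => rfl)
        have h2 : (β.sum fun _ e => e) = ∑ i : Fin n, β i :=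
          Finsupp.sum_fintype _ _ (fun i => rfl)
        rw [h1, h2]
        symm
        apply Nat.div_eq_of_eq_mul_left (by omega)
        rw [Finset.sum_mul]
        exact Finset.sum_congr rfl fun i _ => by rw [mul_comm]; exact (hrecover β hβ i).symm
      have : g.totalDegree ≤ p.totalDegree / q := by
        rw [hg]
        refine (MvPolynomial.totalDegree_finset_sum _ _).trans ?_
        apply Finset.sup_le
        intro β hβ
        refine (MvPolynomial.totalDegree_monomial_le _ _).trans ?_
        rw [show ((divq β).sum fun _ => id) = ((divq β).sum fun _ e => e) from rfl, hsum β hβ]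
        exact Nat.div_le_div_right (MvPolynomial.le_totalDegree hβ)
      calc g.totalDegree ≤ p.totalDegree / q := this
        _ < p.totalDegree := Nat.div_lt_self (by omega) (by omega)
    · intro y
      rw [hg, map_sum, MvPolynomial.eval_eq' y p]
      apply Finset.sum_congr rfl
      intro β hβ
      rw [MvPolynomial.eval_monomial]
      congr 1
      rw [Finsupp.prod_fintype _ _ (fun i => pow_zero _)]
      apply Finset.prod_congr rfl
      intro i _
      rw [frobenius_def, ← pow_mul, hrecover β hβ i]


theorem line_eq_of_two_mem {F : Type} [Field F] {n : ℕ} {l : Set (Fin n → F)}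
    (hl : IsLine F l) {x y : Fin n → F} (hx : x ∈ l) (hy : y ∈ l) (hxy : x ≠ y) :
    l = {z | ∃ t : F, z = x + t • (y - x)} := by
  obtain ⟨v, b, hb, rfl⟩ := hl
  obtain ⟨t₁, rfl⟩ := hx
  obtain ⟨t₂, rfl⟩ := hy
  have ht : t₂ - t₁ ≠ 0 := by
    intro h
    apply hxy
    rw [sub_eq_zero] at h
    rw [h]
  have hyx : (v + t₂ • b) - (v + t₁ • b) = (t₂ - t₁) • b := by
    rw [sub_smul]; abel
  ext z
  simp only [Set.mem_setOf_eq, hyx]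
  constructor
  · rintro ⟨t, rfl⟩
    refine ⟨(t - t₁) / (t₂ - t₁), ?_⟩
    rw [smul_smul, div_mul_cancel₀ _ ht, sub_smul]
    abel
  · rintro ⟨s, rfl⟩
    refine ⟨t₁ + s * (t₂ - t₁), ?_⟩
    rw [add_smul, smul_smul]
    abel

theorem line_inter_subsingleton {F : Type} [Field F] {n : ℕ} {l l' : Set (Fin n → F)}
    (hl : IsLine F l) (hl' : IsLine F l') (hne : l ≠ l') :
    Set.Subsingleton (l ∩ l') := by
  intro x hx y hy
  by_contra hxy
  exact hne ((line_eq_of_two_mem hl hx.1 hy.1 hxy).trans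
    (line_eq_of_two_mem hl' hx.2 hy.2 hxy).symm)

theorem det_ne_zero_of_span {F : Type} [Field F] {n : ℕ} (b : Fin n → Fin n → F)
    (hspan : Submodule.span F (Set.range b) = ⊤) : (Matrix.of b).det ≠ 0 := by
  have hcard : Fintype.card (Fin n) = Module.finrank F (Fin n → F) := by
    rw [Module.finrank_pi]
  have hli : LinearIndependent F b := by
    have h := (basisOfTopLeSpanOfCardEqFinrank b (le_of_eq hspan.symm) hcard).linearIndependent
    rwa [coe_basisOfTopLeSpanOfCardEqFinrank] at h
  intro hdet
  have hdetT : (Matrix.transpose (Matrix.of b)).det = 0 := by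
    rw [Matrix.det_transpose]; exact hdet
  obtain ⟨w, hw0, hw⟩ := (Matrix.exists_mulVec_eq_zero_iff).mpr hdetT
  have : ∑ j, w j • b j = 0 := by
    funext i
    have := congrFun hw i
    simpa [Matrix.mulVec, dotProduct, Finset.sum_apply, mul_comm] using this
  obtain ⟨j, hj⟩ := Function.ne_iff.mp hw0
  exact hj (Fintype.linearIndependent_iff.mp hli w this j)

theorem vec_eq_zero_of_mulVec {F : Type} [Field F] {n : ℕ} (b : Fin n → Fin n → F)
    (hspan : Submodule.span F (Set.range b) = ⊤) (e : F →+* F) (w : Fin n → F)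
    (hw : ∀ j, ∑ i, e (b j i) * w i = 0) : w = 0 := by
  have hdet : ((Matrix.of b).map e).det ≠ 0 := by
    have heq : (Matrix.of b).map ⇑e = e.mapMatrix (Matrix.of b) := rfl
    rw [heq, ← RingHom.map_det]
    intro h
    exact det_ne_zero_of_span b hspan ((map_eq_zero_iff e e.injective).mp h)
  by_contra hw0
  have : ∃ v, v ≠ 0 ∧ ((Matrix.of b).map e).mulVec v = 0 := by
    refine ⟨w, hw0, ?_⟩
    funext j
    simpa [Matrix.mulVec, dotProduct, Matrix.map] using hw j
  exact hdet (Matrix.exists_mulVec_eq_zero_iff.mp this)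

open MvPolynomial Polynomial

theorem totalDegree_pderiv_lt {F : Type} [Field F] {n : ℕ} (p : MvPolynomial (Fin n) F)
    (hdeg : 1 ≤ p.totalDegree) (i : Fin n) :
    (MvPolynomial.pderiv i p).totalDegree < p.totalDegree := by
  classical
  have : (MvPolynomial.pderiv i p).totalDegree ≤ p.totalDegree - 1 := by
    conv_lhs => rw [p.as_sum]
    rw [map_sum]
    refine (MvPolynomial.totalDegree_finset_sum _ _).trans ?_
    apply Finset.sup_le
    intro γ hγ
    rw [MvPolynomial.pderiv_monomial]
    by_cases hγi : γ i = 0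
    · rw [hγi]
      simp
    · refine (MvPolynomial.totalDegree_monomial_le _ _).trans ?_
      have h1 : ((γ - Finsupp.single i 1).sum fun _ => id) = ∑ j : Fin n, (γ j - (Finsupp.single i 1) j) := by
        rw [Finsupp.sum_fintype _ _ (fun j => rfl)]
        apply Finset.sum_congr rfl
        intro j _
        rw [Finsupp.tsub_apply]
        rfl
      have h2 : (γ.sum fun _ e => e) = ∑ j : Fin n, γ j := Finsupp.sum_fintype _ _ (fun j => rfl)
      have h3 : ∑ j : Fin n, (γ j - (Finsupp.single i 1) j)
          = (∑ j : Fin n, γ j) - 1 := by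
        rw [← Finset.add_sum_erase _ _ (Finset.mem_univ i),
            ← Finset.add_sum_erase _ (fun j => γ j) (Finset.mem_univ i)]
        have : ∑ j ∈ Finset.univ.erase i, (γ j - (Finsupp.single i 1) j)
            = ∑ j ∈ Finset.univ.erase i, γ j := by
          apply Finset.sum_congr rfl
          intro j hj
          rw [Finsupp.single_apply, if_neg (Finset.ne_of_mem_erase hj).symm]
          omega
        rw [this, Finsupp.single_apply, if_pos rfl]
        have hle' : 1 ≤ γ i := by omega
        omega
      rw [h1, h3]
      have hle2 := MvPolynomial.le_totalDegree hγ
      rw [h2] at hle2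
      omega
  omega

theorem exists_line_few_joints {F : Type} [Field F] {n : ℕ} (hn : 1 ≤ n)
    (𝔏 : Finset (Set (Fin n → F))) (hlines : ∀ l ∈ 𝔏, IsLine F l)
    (m : ℕ) (hfin : {x : Fin n → F | IsJoint F ↑𝔏 x}.Finite)
    (hcard : {x : Fin n → F | IsJoint F ↑𝔏 x}.ncard < (m+1)^n)
    (hall : ∀ ℓ ∈ 𝔏, n*m < ({x : Fin n → F | IsJoint F ↑𝔏 x} ∩ ℓ).ncard) :
    𝔏 = ∅ := by
  classical
  by_contra hne'
  obtain ⟨ℓ₀, hℓ₀⟩ := Finset.nonempty_of_ne_empty hne'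
  set J := {x : Fin n → F | IsJoint F ↑𝔏 x} with hJ
  set d := n*m with hd
  -- J is nonempty
  have hJne : J.Nonempty := by
    have := hall ℓ₀ hℓ₀
    have hpos : 0 < (J ∩ ℓ₀).ncard := by omega
    obtain ⟨x, hx⟩ := Set.nonempty_of_ncard_ne_zero hpos.ne'
    exact ⟨x, hx.1⟩
  -- the candidate predicate
  set Good : MvPolynomial (Fin n) F → Prop :=
    fun p => p ≠ 0 ∧ p.totalDegree ≤ d ∧
      ∃ e : F →+* F, ∀ x ∈ J, MvPolynomial.eval (fun i => e (x i)) p = 0 with hGood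
  have hex : ∃ k, ∃ p, Good p ∧ p.totalDegree = k := by
    obtain ⟨p, hp0, hpd, hpz⟩ := exists_low_degree J hfin m hcard
    exact ⟨p.totalDegree, p, ⟨hp0, hpd, RingHom.id F, fun x hx => by
      simpa using hpz x hx⟩, rfl⟩
  set k₀ := Nat.find hex with hk₀
  obtain ⟨p, hpGood, hpdeg⟩ := Nat.find_spec hex
  obtain ⟨hp0, hpd, e, hpz⟩ := hpGood
  have hmin : ∀ p', Good p' → k₀ ≤ p'.totalDegree :=
    fun p' hp' => Nat.find_le ⟨p', hp', rfl⟩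
  -- degree at least 1
  have hdeg1 : 1 ≤ p.totalDegree := by
    by_contra h
    have h0 : p.totalDegree = 0 := by omega
    obtain ⟨x₀, hx₀⟩ := hJne
    have hsupp0 : ∀ β ∈ p.support, β = (0 : Fin n →₀ ℕ) := by
      intro β hβ
      have := (MvPolynomial.totalDegree_eq_zero_iff (Fin n) p).mp h0 β hβ
      ext j
      exact this j
    have hzero : (0 : Fin n →₀ ℕ) ∈ p.support := by
      obtain ⟨β, hβ⟩ := MvPolynomial.support_nonempty.mpr hp0
      rwa [hsupp0 β hβ] at hβ
    have := hpz x₀ hx₀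
    rw [MvPolynomial.eval_eq'] at this
    rw [Finset.sum_eq_single_of_mem (0 : Fin n →₀ ℕ) hzero] at this
    · simp only [Finsupp.coe_zero, Pi.zero_apply, pow_zero, Finset.prod_const_one, mul_one] at this
      exact (MvPolynomial.mem_support_iff.mp hzero) this
    · intro β hβ hne
      exact absurd (hsupp0 β hβ) hne
  -- step 1 : p vanishes on (the e-image of) every parametrized line containing > d joints
  have step1 : ∀ v b : Fin n → F, b ≠ 0 →
      d < (J ∩ {x | ∃ t : F, x = v + t • b}).ncard →
      lineR (fun i => e (v i)) (fun i => e (b i)) p = 0 := by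
    intro v b hb hcnt
    set ℓ : Set (Fin n → F) := {x | ∃ t : F, x = v + t • b} with hℓ
    have hJℓfin : (J ∩ ℓ).Finite := hfin.subset Set.inter_subset_left
    set T := hJℓfin.toFinset with hT
    have hTcard : d < T.card := by
      rwa [Set.ncard_eq_toFinset_card _ hJℓfin] at hcnt
    set tch : (Fin n → F) → F := fun x =>
      if h : ∃ t : F, x = v + t • b then h.choose else 0 with htch
    have htch_spec : ∀ x ∈ T, x = v + (tch x) • b := by
      intro x hx
      have hxℓ : x ∈ ℓ := (hJℓfin.mem_toFinset.mp hx).2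
      have h1 : tch x = hxℓ.choose := by rw [htch]; exact dif_pos hxℓ
      rw [h1]
      exact hxℓ.choose_spec
    have hinj : Set.InjOn (fun x => e (tch x)) T := by
      intro x hx y hy hxy
      have hx' := htch_spec x hx
      have hy' := htch_spec y hy
      have : tch x = tch y := e.injective hxy
      rw [hx', hy', this]
    apply Polynomial.eq_zero_of_natDegree_lt_card_of_eval_eq_zero' _ (T.image (fun x => e (tch x)))
    · intro r hr
      obtain ⟨x, hx, rfl⟩ := Finset.mem_image.mp hr
      rw [eval_lineR]
      have hxJ : x ∈ J := (hJℓfin.mem_toFinset.mp hx).1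
      have : (fun i => e (v i)) + e (tch x) • (fun i => e (b i)) = fun i => e (x i) := by
        funext i
        simp only [Pi.add_apply, Pi.smul_apply, smul_eq_mul]
        rw [← map_mul, ← map_add]
        congr 1
        have hxi := congrFun (htch_spec x hx) i
        simp only [Pi.add_apply, Pi.smul_apply, smul_eq_mul] at hxi
        exact hxi.symm
      rw [this]
      exact hpz x hxJ
    · calc (lineR (fun i => e (v i)) (fun i => e (b i)) p).natDegree
          ≤ p.totalDegree := natDegree_lineR_le _ _ _
        _ ≤ d := hpd
        _ < T.card := hTcard
        _ = (T.image (fun x => e (tch x))).card := (Finset.card_image_of_injOn hinj).symm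
  -- step 2 : all partial derivatives vanish on e-image of J
  have step2 : ∀ x ∈ J, ∀ i, MvPolynomial.eval (fun j => e (x j)) (MvPolynomial.pderiv i p) = 0 := by
    intro x hxJ i
    obtain ⟨l, hlinj, hlmem, hlthrough, bdir, hdir, hspan⟩ := hxJ
    set w : Fin n → F := fun i => MvPolynomial.eval (fun j => e (x j)) (MvPolynomial.pderiv i p) with hw
    have hwz : ∀ j, ∑ i', e (bdir j i') * w i' = 0 := by
      intro j
      obtain ⟨hbj, vj, hlj⟩ := hdir j
      -- x is on the line l j = {vj + t bdir j}
      have hxl : x ∈ l j := hlthrough j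
      rw [hlj] at hxl
      obtain ⟨tj, htj⟩ := hxl
      -- p vanishes on this line
      have hvan : lineR (fun i => e (vj i)) (fun i => e (bdir j i)) p = 0 := by
        apply step1 vj (bdir j) hbj
        have : l j ∈ 𝔏 := hlmem j
        have := hall (l j) this
        rwa [hlj] at this
      have hder := derivative_lineR (fun i => e (vj i)) (fun i => e (bdir j i)) p
      rw [hvan] at hder
      simp only [map_zero] at hder
      have := congrArg (Polynomial.eval (e tj)) hder.symm
      rw [eval_lineR, Polynomial.eval_zero] at this
      rw [map_sum] at this
      have harg : (fun i => e (vj i)) + e tj • (fun i => e (bdir j i)) = fun i => e (x i) := by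
        funext i
        simp only [Pi.add_apply, Pi.smul_apply, smul_eq_mul]
        rw [← map_mul, ← map_add]
        congr 1
        have hxi := congrFun htj i
        simp only [Pi.add_apply, Pi.smul_apply, smul_eq_mul] at hxi
        exact hxi.symm
      rw [harg] at this
      rw [← this]
      apply Finset.sum_congr rfl
      intro i' _
      rw [map_mul, MvPolynomial.eval_C]
    exact congrFun (vec_eq_zero_of_mulVec bdir hspan e w hwz) i
  -- step 3 : all partial derivatives are zero
  have step3 : ∀ i, MvPolynomial.pderiv i p = 0 := by
    intro i
    by_contra hne
    have hlt := totalDegree_pderiv_lt p hdeg1 i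
    have : Good (MvPolynomial.pderiv i p) :=
      ⟨hne, by omega, e, fun x hx => step2 x hx i⟩
    have := hmin _ this
    omega
  -- frobenius descent gives a smaller Good polynomial
  obtain ⟨e', g, hg0, hglt, hgev⟩ := frobenius_descent p hp0 hdeg1 step3
  have : Good g := by
    refine ⟨hg0, by omega, e'.comp e, fun x hx => ?_⟩
    have := hgev (fun i => e (x i))
    simp only [RingHom.coe_comp, Function.comp_apply]
    rw [this]
    exact hpz x hx
  have := hmin g this
  omega

theorem joints_finite {F : Type} [Field F] {n : ℕ} (hn : 2 ≤ n)
    (𝔏 : Finset (Set (Fin n → F))) (hlines : ∀ l ∈ 𝔏, IsLine F l) :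
    {x : Fin n → F | IsJoint F ↑𝔏 x}.Finite := by
  classical
  set J := {x : Fin n → F | IsJoint F ↑𝔏 x} with hJ
  have hch : ∀ x ∈ J, ∃ l : Fin n → Set (Fin n → F),
      Function.Injective l ∧ (∀ i, l i ∈ 𝔏) ∧ (∀ i, x ∈ l i) := by
    intro x hx
    obtain ⟨l, hinj, hmem, hforms⟩ := hx
    exact ⟨l, hinj, hmem, hforms.1⟩
  choose! f hf using hch
  set i0 : Fin n := ⟨0, by omega⟩ with hi0
  set i1 : Fin n := ⟨1, by omega⟩ with hi1
  have hinjon : Set.InjOn (fun x => (f x i0, f x i1)) J := by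
    intro x hx y hy hxy
    obtain ⟨hinjx, hmemx, hthx⟩ := hf x hx
    obtain ⟨hinjy, hmemy, hthy⟩ := hf y hy
    have h0 : f x i0 = f y i0 := congrArg Prod.fst hxy
    have h1 : f x i1 = f y i1 := congrArg Prod.snd hxy
    have hll : f x i0 ≠ f x i1 := by
      intro h
      have := hinjx h
      rw [hi0, hi1] at this
      exact absurd (congrArg Fin.val this) (by simp)
    have hxmem : x ∈ f x i0 ∩ f x i1 := ⟨hthx i0, hthx i1⟩
    have hymem : y ∈ f x i0 ∩ f x i1 := ⟨h0 ▸ hthy i0, h1 ▸ hthy i1⟩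
    exact line_inter_subsingleton (hlines _ (hmemx i0)) (hlines _ (hmemx i1)) hll hxmem hymem
  apply Set.Finite.of_finite_image _ hinjon
  apply Set.Finite.subset (Set.Finite.prod 𝔏.finite_toSet 𝔏.finite_toSet)
  rintro ⟨a, c⟩ ⟨x, hx, heq⟩
  obtain ⟨_, hmem, _⟩ := hf x hx
  rw [← heq]
  exact ⟨hmem i0, hmem i1⟩

theorem joints_empty_of_empty {F : Type} [Field F] {n : ℕ} (hn : 1 ≤ n) :
    {x : Fin n → F | IsJoint F ↑(∅ : Finset (Set (Fin n → F))) x} = ∅ := by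
  ext x
  simp only [Set.mem_setOf_eq, Set.mem_empty_iff_false, iff_false]
  rintro ⟨l, hinj, hmem, hforms⟩
  have := hmem ⟨0, by omega⟩
  simp at this

theorem joints_card_bound {F : Type} [Field F] {n : ℕ} (hn : 2 ≤ n) (m : ℕ) :
    ∀ (K : ℕ) (𝔏 : Finset (Set (Fin n → F))), 𝔏.card ≤ K →
      (∀ l ∈ 𝔏, IsLine F l) →
      {x : Fin n → F | IsJoint F ↑𝔏 x}.ncard < (m+1)^n →
      {x : Fin n → F | IsJoint F ↑𝔏 x}.ncard ≤ 𝔏.card * (n*m) := by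
  intro K
  induction K with
  | zero =>
    intro 𝔏 hK _ _
    have h𝔏 : 𝔏 = ∅ := Finset.card_eq_zero.mp (by omega)
    subst h𝔏
    rw [joints_empty_of_empty (by omega)]
    simp
  | succ K ih =>
    intro 𝔏 hK hlines hcard
    classical
    set J := {x : Fin n → F | IsJoint F ↑𝔏 x} with hJ
    have hfin : J.Finite := joints_finite hn 𝔏 hlines
    by_cases hd : ∀ ℓ ∈ 𝔏, n*m < (J ∩ ℓ).ncard
    · have h𝔏 := exists_line_few_joints (by omega) 𝔏 hlines m hfin hcard hd
      subst h𝔏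
      rw [hJ, joints_empty_of_empty (by omega)]
      simp
    · push_neg at hd
      obtain ⟨ℓ, hℓ, hle⟩ := hd
      set 𝔏' := 𝔏.erase ℓ with h𝔏'
      have hlines' : ∀ l ∈ 𝔏', IsLine F l := fun l hl => hlines l (Finset.mem_of_mem_erase hl)
      set J' := {x : Fin n → F | IsJoint F ↑𝔏' x} with hJ'
      have hsub : J' ⊆ J := by
        rintro x ⟨l, hinj, hmem, hforms⟩
        exact ⟨l, hinj, fun i => Finset.mem_coe.mpr
          (Finset.mem_of_mem_erase (Finset.mem_coe.mp (hmem i))), hforms⟩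
      have hsplit : J ⊆ J' ∪ (J ∩ ℓ) := by
        intro x hx
        by_cases hxℓ : x ∈ ℓ
        · right; exact ⟨hx, hxℓ⟩
        · left
          obtain ⟨l, hinj, hmem, hforms⟩ := hx
          refine ⟨l, hinj, fun i => Finset.mem_coe.mpr (Finset.mem_erase.mpr
            ⟨fun h => hxℓ (h ▸ hforms.1 i), Finset.mem_coe.mp (hmem i)⟩), hforms⟩
      have hcard' : J'.ncard < (m+1)^n := lt_of_le_of_lt (Set.ncard_le_ncard hsub hfin) hcard
      have hK' : 𝔏'.card ≤ K := by
        rw [h𝔏', Finset.card_erase_of_mem hℓ]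
        omega
      have ih' := ih 𝔏' hK' hlines' hcard'
      have hc1 : 1 ≤ 𝔏.card := Finset.card_pos.mpr ⟨ℓ, hℓ⟩
      calc J.ncard ≤ (J' ∪ (J ∩ ℓ)).ncard :=
            Set.ncard_le_ncard hsplit (((hfin.subset hsub).union (hfin.subset Set.inter_subset_left)))
        _ ≤ J'.ncard + (J ∩ ℓ).ncard := Set.ncard_union_le _ _
        _ ≤ 𝔏'.card * (n*m) + n*m := add_le_add ih' hle
        _ = (𝔏.card - 1) * (n*m) + n*m := by rw [h𝔏', Finset.card_erase_of_mem hℓ]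
        _ = (𝔏.card - 1 + 1) * (n*m) := by rw [add_mul, one_mul]
        _ = 𝔏.card * (n*m) := by congr 1; omega

end JointsProof

/-- **Joints theorem over arbitrary fields.** For `n ≥ 3` there is a constant `C`
depending only on `n` such that for any field `F` and any finite collection `𝔏`
of lines in `F^n`, the set of joints `J` of `𝔏` satisfies `|J| ≤ C · L^{n/(n-1)}`. -/
theorem stmt0 (n : ℕ) (hn : 3 ≤ n) :
    ∃ C : ℝ, ∀ (F : Type) [Field F] (𝔏 : Finset (Set (Fin n → F))),
      (∀ l ∈ 𝔏, IsLine F l) →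
      (Set.ncard {x : Fin n → F | IsJoint F ↑𝔏 x} : ℝ) ≤
        C * (𝔏.card : ℝ) ^ ((n : ℝ) / ((n : ℝ) - 1)) := by
  classical
  refine ⟨(n:ℝ) ^ (2:ℝ), ?_⟩
  intro F _ 𝔏 hlines
  set J := {x : Fin n → F | IsJoint F ↑𝔏 x} with hJ
  set N := J.ncard with hN
  set L := 𝔏.card with hL
  have hnR3 : (3:ℝ) ≤ (n:ℝ) := by exact_mod_cast hn
  have hn1 : (0:ℝ) < (n:ℝ) - 1 := by linarith
  have hnpos : (0:ℝ) < (n:ℝ) := by linarith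
  have hC0 : (0:ℝ) ≤ (n:ℝ)^(2:ℝ) := Real.rpow_nonneg (by positivity) _
  have hLpow0 : (0:ℝ) ≤ (L:ℝ) ^ ((n:ℝ)/((n:ℝ)-1)) := Real.rpow_nonneg (by positivity) _
  by_cases hN0 : N = 0
  · rw [hN0]
    push_cast
    positivity
  · have hN1 : 1 ≤ N := by omega
    set P : ℕ → Prop := fun k => k^n ≤ N with hP
    set m := Nat.findGreatest P N with hm
    have hP1 : P 1 := by rw [hP]; simpa using hN1
    have hm1 : 1 ≤ m := Nat.le_findGreatest hN1 hP1
    have hmn : m^n ≤ N := Nat.findGreatest_spec hN1 hP1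
    have hm2 : N < (m+1)^n := by
      by_cases h : m + 1 ≤ N
      · have hgt : ¬ P (m+1) := Nat.findGreatest_is_greatest (by omega) h
        rw [hP] at hgt
        omega
      · calc N < m+1 := by omega
          _ ≤ (m+1)^n := Nat.le_self_pow (by omega) _
    have hbound : N ≤ L * (n*m) :=
      joints_card_bound (by omega) m L 𝔏 le_rfl hlines hm2
    set x : ℝ := (N:ℝ) with hx
    have hx1 : (1:ℝ) ≤ x := by rw [hx]; exact_mod_cast hN1
    have hx0 : (0:ℝ) < x := by linarith
    have hmle : (m:ℝ) ≤ x ^ (1/(n:ℝ)) := by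
      have h1 : ((m:ℝ))^(n:ℕ) ≤ x := by rw [hx]; exact_mod_cast hmn
      have h2 : (m:ℝ) = (((m:ℝ))^(n:ℕ))^(1/(n:ℝ)) := by
        rw [← Real.rpow_natCast (m:ℝ) n, ← Real.rpow_mul (by positivity),
          mul_one_div_cancel (by positivity : (n:ℝ) ≠ 0), Real.rpow_one]
      rw [h2]
      exact Real.rpow_le_rpow (by positivity) h1 (by positivity)
    have hNL : x ≤ (n:ℝ) * (L:ℝ) * x ^ (1/(n:ℝ)) := by
      have h3 : x ≤ (L:ℝ) * ((n:ℝ) * (m:ℝ)) := by rw [hx]; exact_mod_cast hbound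
      calc x ≤ (L:ℝ) * ((n:ℝ) * (m:ℝ)) := h3
        _ ≤ (L:ℝ) * ((n:ℝ) * x ^ (1/(n:ℝ))) := by
            apply mul_le_mul_of_nonneg_left _ (by positivity)
            exact mul_le_mul_of_nonneg_left hmle (by positivity)
        _ = (n:ℝ) * (L:ℝ) * x ^ (1/(n:ℝ)) := by ring
    have hxp : (0:ℝ) < x ^ (1/(n:ℝ)) := Real.rpow_pos_of_pos hx0 _
    have hsplit : x = x ^ (((n:ℝ)-1)/(n:ℝ)) * x ^ (1/(n:ℝ)) := by
      rw [← Real.rpow_add hx0]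
      rw [show ((n:ℝ)-1)/(n:ℝ) + 1/(n:ℝ) = 1 by field_simp; ring]
      rw [Real.rpow_one]
    have hpow : x ^ (((n:ℝ)-1)/(n:ℝ)) ≤ (n:ℝ) * (L:ℝ) := by
      apply le_of_mul_le_mul_right _ hxp
      rw [← hsplit]
      exact hNL
    have hfinal : x ≤ ((n:ℝ)*(L:ℝ)) ^ ((n:ℝ)/((n:ℝ)-1)) := by
      have h1 : x = (x ^ (((n:ℝ)-1)/(n:ℝ))) ^ ((n:ℝ)/((n:ℝ)-1)) := by
        rw [← Real.rpow_mul hx0.le]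
        rw [show ((n:ℝ)-1)/(n:ℝ) * ((n:ℝ)/((n:ℝ)-1)) = 1 by field_simp]
        rw [Real.rpow_one]
      rw [h1]
      exact Real.rpow_le_rpow (Real.rpow_nonneg hx0.le _) hpow (by positivity)
    have hsplit2 : ((n:ℝ)*(L:ℝ)) ^ ((n:ℝ)/((n:ℝ)-1))
        = (n:ℝ)^((n:ℝ)/((n:ℝ)-1)) * (L:ℝ)^((n:ℝ)/((n:ℝ)-1)) :=
      Real.mul_rpow (by positivity) (Nat.cast_nonneg _)
    have hexp : (n:ℝ)^((n:ℝ)/((n:ℝ)-1)) ≤ (n:ℝ)^(2:ℝ) := by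
      apply Real.rpow_le_rpow_of_exponent_le (by linarith)
      rw [div_le_iff₀ hn1]
      linarith
    calc x ≤ ((n:ℝ)*(L:ℝ)) ^ ((n:ℝ)/((n:ℝ)-1)) := hfinal
      _ = (n:ℝ)^((n:ℝ)/((n:ℝ)-1)) * (L:ℝ)^((n:ℝ)/((n:ℝ)-1)) := hsplit2
      _ ≤ (n:ℝ)^(2:ℝ) * (L:ℝ)^((n:ℝ)/((n:ℝ)-1)) :=
          mul_le_mul_of_nonneg_right hexp hLpow0
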